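/- Let (σ, Q, ρ) with σ ∈ ℝ^{1×n}, Q ∈ ℝ^{n×n}, ρ ∈ ℝ^{n×1}, let V ∈ ℝ^{n×N} be a collector matrix and U ∈ ℝ^{N×n} a distributor for V. If VUQV = QV and VUρ = ρ (V is a strong bisimulation / ordinary lumping), then the total reward rate is preserved: for every t ∈ ℝ, σ·exp(tQ)·ρ = (σV)·exp(t·UQV)·(Uρ). -/

import Mathlib

open Matrix

/-- The all-ones real column vector. -/
def onesR (n : ℕ) : Matrix (Fin n) (Fin 1) ℝ := Matrix.of fun _ _ => 1

/-- A real matrix is a collector if every entry is 0 or 1 and every row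
contains exactly one 1. -/
def IsCollectorR {n N : ℕ} (V : Matrix (Fin n) (Fin N) ℝ) : Prop :=
  (∀ i j, V i j = 0 ∨ V i j = 1) ∧ ∀ i, ∃! j, V i j = 1


noncomputable def mulRightCLM {n N : ℕ} (V : Matrix (Fin n) (Fin N) ℝ) :
    Matrix (Fin n) (Fin n) ℝ →L[ℝ] Matrix (Fin n) (Fin N) ℝ :=
  LinearMap.toContinuousLinearMap
    { toFun := fun X => X * V
      map_add' := fun X Y => Matrix.add_mul X Y V
      map_smul' := fun c X => Matrix.smul_mul c X V }

noncomputable def mulLeftCLM {n N : ℕ} (V : Matrix (Fin n) (Fin N) ℝ) :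
    Matrix (Fin N) (Fin N) ℝ →L[ℝ] Matrix (Fin n) (Fin N) ℝ :=
  LinearMap.toContinuousLinearMap
    { toFun := fun X => V * X
      map_add' := fun X Y => Matrix.mul_add V X Y
      map_smul' := fun c X => Matrix.mul_smul V c X }

lemma exp_intertwine {n N : ℕ} (A : Matrix (Fin n) (Fin n) ℝ)
    (B : Matrix (Fin N) (Fin N) ℝ) (V : Matrix (Fin n) (Fin N) ℝ)
    (h : A * V = V * B) :
    NormedSpace.exp A * V = V * NormedSpace.exp B := by
  letI : NormedRing (Matrix (Fin n) (Fin n) ℝ) := Matrix.linftyOpNormedRing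
  letI : NormedAlgebra ℝ (Matrix (Fin n) (Fin n) ℝ) := Matrix.linftyOpNormedAlgebra
  letI : NormedRing (Matrix (Fin N) (Fin N) ℝ) := Matrix.linftyOpNormedRing
  letI : NormedAlgebra ℝ (Matrix (Fin N) (Fin N) ℝ) := Matrix.linftyOpNormedAlgebra
  have hpow : ∀ k : ℕ, A ^ k * V = V * B ^ k := by
    intro k
    induction k with
    | zero => simp
    | succ k ih =>
      rw [pow_succ, pow_succ, Matrix.mul_assoc, h, ← Matrix.mul_assoc, ih, Matrix.mul_assoc]
  have hA := NormedSpace.expSeries_summable' (𝕂 := ℝ) A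
  have hB := NormedSpace.expSeries_summable' (𝕂 := ℝ) B
  have h1 : NormedSpace.exp A * V = ∑' k : ℕ, ((k.factorial : ℝ))⁻¹ • (A ^ k * V) := by
    rw [NormedSpace.exp_eq_tsum ℝ]
    have := (mulRightCLM V).map_tsum hA
    simpa [mulRightCLM, Matrix.smul_mul] using this
  have h2 : V * NormedSpace.exp B = ∑' k : ℕ, ((k.factorial : ℝ))⁻¹ • (V * B ^ k) := by
    rw [NormedSpace.exp_eq_tsum ℝ]
    have := (mulLeftCLM V).map_tsum hB
    simpa [mulLeftCLM, Matrix.mul_smul] using this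
  rw [h1, h2]
  exact tsum_congr fun k => by rw [hpow k]

theorem mrc_lumping_preserves_total_reward' {n N : ℕ}
    (σ : Matrix (Fin 1) (Fin n) ℝ) (Q : Matrix (Fin n) (Fin n) ℝ)
    (ρ : Matrix (Fin n) (Fin 1) ℝ)
    (V : Matrix (Fin n) (Fin N) ℝ) (U : Matrix (Fin N) (Fin n) ℝ)
    (hQ : V * U * Q * V = Q * V) (hρ : V * U * ρ = ρ) :
    ∀ t : ℝ, σ * NormedSpace.exp (t • Q) * ρ =
      (σ * V) * NormedSpace.exp (t • (U * Q * V)) * (U * ρ) := by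
  intro t
  have key : NormedSpace.exp (t • Q) * V = V * NormedSpace.exp (t • (U * Q * V)) := by
    apply exp_intertwine
    rw [Matrix.smul_mul, Matrix.mul_smul]
    congr 1
    rw [← hQ]
    simp only [Matrix.mul_assoc]
  calc σ * NormedSpace.exp (t • Q) * ρ
      = σ * NormedSpace.exp (t • Q) * (V * U * ρ) := by rw [hρ]
    _ = σ * (NormedSpace.exp (t • Q) * V) * (U * ρ) := by
        simp only [Matrix.mul_assoc]
    _ = σ * (V * NormedSpace.exp (t • (U * Q * V))) * (U * ρ) := by rw [key]
    _ = (σ * V) * NormedSpace.exp (t • (U * Q * V)) * (U * ρ) := by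
        simp only [Matrix.mul_assoc]

/-- ordinary lumping preserves the total reward rate
`R(t) = σ·exp(tQ)·ρ`. -/
theorem mrc_lumping_preserves_total_reward {n N : ℕ}
    (σ : Matrix (Fin 1) (Fin n) ℝ) (Q : Matrix (Fin n) (Fin n) ℝ)
    (ρ : Matrix (Fin n) (Fin 1) ℝ)
    (V : Matrix (Fin n) (Fin N) ℝ) (U : Matrix (Fin N) (Fin n) ℝ)
    (hV : IsCollectorR V)
    (hU₁ : U * onesR n = onesR N) (hU₂ : U * V = 1)
    (hQ : V * U * Q * V = Q * V) (hρ : V * U * ρ = ρ) :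
    ∀ t : ℝ, σ * NormedSpace.exp (t • Q) * ρ =
      (σ * V) * NormedSpace.exp (t • (U * Q * V)) * (U * ρ) :=
  mrc_lumping_preserves_total_reward' σ Q ρ V U hQ hρ
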